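/- The linear scaling positivity-preserving limiter preserves cell averages and nonnegativity: given a function p on a cell K with average p̄ ≥ 0 and minimum m = min over a finite set of points, the limited function p̃(x) = θ(p(x) - p̄) + p̄ with θ = min(1, p̄/(p̄ - m)) (θ=1 if m ≥ 0) satisfies (i) p̃ has the same average p̄, (ii) p̃ ≥ 0 at all the specified points, and (iii) |p̃(x) - p(x)| = (1-θ)|p(x) - p̄| ≤ |p(x) - p̄| at every point. -/

import Mathlib

open MeasureTheory

/-- The linear scaling positivity-preserving limiter
`p̃ = θ (p - p̄) + p̄`, with `θ = min 1 (p̄/(p̄ - m))` (and `θ = 1` if `m ≥ 0`),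
preserves the cell average, is nonnegative at the specified points, and
changes `p` by at most `|p - p̄|` at every point. -/
theorem linear_scaling_pp_limiter
    {α : Type*} [MeasurableSpace α] (μ : Measure α) [IsFiniteMeasure μ]
    (hμ : μ Set.univ ≠ 0)
    (p : α → ℝ) (hp : Integrable p μ)
    (pts : Finset α) (hpts : pts.Nonempty)
    (pbar : ℝ) (hpbar : pbar = (∫ x, p x ∂μ) / (μ Set.univ).toReal)
    (hpbar0 : 0 ≤ pbar)
    (m : ℝ) (hm : m = (pts.image p).min' (hpts.image p))
    (hwd : m < 0 → m < pbar)
    (θ : ℝ) (hθ : θ = if 0 ≤ m then 1 else min 1 (pbar / (pbar - m)))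
    (pt : α → ℝ) (hpt : pt = fun x => θ * (p x - pbar) + pbar) :
    (∫ x, pt x ∂μ) = ∫ x, p x ∂μ ∧
    (∀ x ∈ pts, 0 ≤ pt x) ∧
    (∀ x, |pt x - p x| = (1 - θ) * |p x - pbar| ∧ |pt x - p x| ≤ |p x - pbar|) := by
  have hθ0 : 0 ≤ θ := by
    rw [hθ]
    split_ifs with h
    · norm_num
    · push_neg at h
      have hpm : 0 < pbar - m := by linarith [hwd h]
      exact le_min zero_le_one (div_nonneg hpbar0 hpm.le)
  have hθ1 : θ ≤ 1 := by
    rw [hθ]; split_ifs with h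
    · exact le_refl 1
    · exact min_le_left _ _
  have hμR : (μ Set.univ).toReal ≠ 0 := by
    simp [ENNReal.toReal_eq_zero_iff, hμ, measure_ne_top μ Set.univ]
  have hmul : pbar * (μ Set.univ).toReal = ∫ x, p x ∂μ := by
    rw [hpbar, div_mul_cancel₀ _ hμR]
  refine ⟨?_, ?_, ?_⟩
  · rw [hpt]
    simp only
    have hInt1 : Integrable (fun x => θ * (p x - pbar)) μ :=
      (hp.sub (integrable_const pbar)).const_mul θ
    rw [integral_add hInt1 (integrable_const pbar),
      integral_const_mul, integral_sub hp (integrable_const pbar), integral_const]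
    simp only [smul_eq_mul, measureReal_def]
    linear_combination (1 - θ) * hmul
  · intro x hx
    have hmle : m ≤ p x := by
      rw [hm]
      exact Finset.min'_le _ _ (Finset.mem_image_of_mem p hx)
    rw [hpt]
    simp only
    by_cases h : 0 ≤ m
    · have : θ = 1 := by rw [hθ, if_pos h]
      rw [this]; linarith
    · push_neg at h
      have hpm : 0 < pbar - m := by linarith [hwd h]
      have hθle : θ ≤ pbar / (pbar - m) := by
        rw [hθ, if_neg (not_le.mpr h)]; exact min_le_right _ _
      have h1 : θ * (m - pbar) ≤ p x * θ - pbar * θ := by nlinarith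
      have h2 : θ * (pbar - m) ≤ pbar := by
        calc θ * (pbar - m) ≤ (pbar / (pbar - m)) * (pbar - m) := by nlinarith
          _ = pbar := div_mul_cancel₀ _ hpm.ne'
      nlinarith
  · intro x
    have key : |pt x - p x| = (1 - θ) * |p x - pbar| := by
      rw [hpt]
      simp only
      have : θ * (p x - pbar) + pbar - p x = (1 - θ) * -(p x - pbar) := by ring
      rw [this, abs_mul, abs_neg, abs_of_nonneg (by linarith : (0:ℝ) ≤ 1 - θ)]
    refine ⟨key, ?_⟩
    rw [key]
    nlinarith [abs_nonneg (p x - pbar)]
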